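/- The Unanimous Greedy Algorithm achieves a 1/2-approximation: on instances with unit project costs and unanimous districts (sw_i(x_j) ∈ {0, |d_i|}), the greedy algorithm that repeatedly selects a maximum-coverage project, breaking ties by maximum total welfare, returns an outcome W that is district-fair, budget-feasible, and satisfies sw(W) ≥ sw(W*)/2 for every district-fair budget-feasible outcome W*. -/

import Mathlib

open Finset

/-- Fractional feasibility for a single district (unit costs, natural-valued
welfare). -/
def FracFeasible {P : Type*} [Fintype P] (sw : P → ℕ) (f : ℕ)
    (W : Finset P) (p : P → ℝ) : Prop :=
  (∀ x, 0 ≤ p x ∧ p x ≤ 1) ∧ (∀ x ∈ W, p x = 0) ∧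
    (f : ℝ) ≤ (∑ x ∈ W, (sw x : ℝ)) + ∑ x, p x * (sw x : ℝ)

/-- Residual budget requirement of a district (unit costs: cost of `p` is
`∑ x, p x`). -/
noncomputable def resid {P : Type*} [Fintype P] (sw : P → ℕ) (f : ℕ)
    (W : Finset P) : ℝ :=
  sInf ((fun p : P → ℝ => ∑ x, p x) '' {p | FracFeasible sw f W p})

/-- Total coverage of an outcome. -/
noncomputable def coverTot {P : Type*} [Fintype P] {k : ℕ}
    (sw : Fin k → P → ℕ) (f bd : Fin k → ℕ) (W : Finset P) : ℝ :=
  ∑ i, ((bd i : ℝ) - resid (sw i) (f i) W)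

set_option linter.unusedSectionVars false
set_option linter.unusedVariables false
set_option maxHeartbeats 1000000

namespace UGH
variable {P : Type*} [DecidableEq P] [Fintype P] {k : ℕ}

/-- The combinatorial coverage function. -/
def gf (A : Fin k → Finset P) (m : Fin k → ℕ) (X : Finset P) : ℕ :=
  ∑ i, min (m i) ((X ∩ A i).card)

/-- greedy condition along a list, relative to a start set. -/
def GreedyFrom (A : Fin k → Finset P) (m : Fin k → ℕ) (s : P → ℕ) :
    Finset P → List P → Prop
  | _, [] => True
  | W, x :: t => x ∉ W ∧
      (∀ y, y ∉ W → gf A m (insert y W) ≤ gf A m (insert x W) ∧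
        (gf A m (insert y W) = gf A m (insert x W) → s y ≤ s x)) ∧
      GreedyFrom A m s (insert x W) t

/-- total coverage surplus of low-value steps -/
def lowsum (A : Fin k → Finset P) (m : Fin k → ℕ) (s : P → ℕ) (τ : ℕ) :
    Finset P → List P → ℕ
  | _, [] => 0
  | W, x :: t => (if s x < τ then gf A m (insert x W) - gf A m W - 1 else 0) +
      lowsum A m s τ (insert x W) t

variable {A : Fin k → Finset P} {m : Fin k → ℕ} {s : P → ℕ} {τ : ℕ}

lemma gf_mono {X Y : Finset P} (h : X ⊆ Y) : gf A m X ≤ gf A m Y :=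
  Finset.sum_le_sum fun i _ =>
    min_le_min le_rfl (card_le_card (inter_subset_inter h Subset.rfl))

lemma gf_le (X : Finset P) : gf A m X ≤ ∑ i, m i :=
  Finset.sum_le_sum fun i _ => min_le_left _ _

lemma gf_empty : gf A m (∅ : Finset P) = 0 := by simp [gf]

lemma gf_insert {X : Finset P} {q : P} (hq : q ∉ X) :
    gf A m (insert q X) = gf A m X +
      ∑ i, (if q ∈ A i ∧ (X ∩ A i).card < m i then 1 else 0) := by
  rw [gf, gf, ← Finset.sum_add_distrib]
  refine Finset.sum_congr rfl fun i _ => ?_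
  by_cases hqa : q ∈ A i
  · have h1 : insert q X ∩ A i = insert q (X ∩ A i) := insert_inter_of_mem hqa
    rw [h1, card_insert_of_notMem (fun hc => hq (mem_of_mem_inter_left hc))]
    rcases lt_or_ge ((X ∩ A i).card) (m i) with hlt | hge
    · simp only [hqa, hlt, and_self, if_true]
      rw [Nat.min_def, Nat.min_def]
      split_ifs <;> omega
    · simp only [hqa, true_and, if_neg (not_lt.mpr hge), Nat.add_zero]
      rw [Nat.min_def, Nat.min_def]
      split_ifs <;> omega
  · rw [insert_inter_of_notMem hqa]
    simp [hqa]

lemma low_cov {W : Finset P} {x y0 : P}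
    (hcond : ∀ y, y ∉ W → gf A m (insert y W) ≤ gf A m (insert x W) ∧
        (gf A m (insert y W) = gf A m (insert x W) → s y ≤ s x))
    (hy0W : y0 ∉ W) (hy0 : τ ≤ s y0) (hsx : s x < τ) :
    gf A m W < gf A m (insert x W) := by
  rcases hcond y0 hy0W with ⟨h1, h2⟩
  rcases Nat.lt_or_ge (gf A m W) (gf A m (insert x W)) with h | h
  · exact h
  · exfalso
    have hx : gf A m (insert x W) = gf A m W :=
      le_antisymm h (gf_mono (subset_insert _ _))
    have hy : gf A m (insert y0 W) = gf A m (insert x W) :=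
      le_antisymm h1 (hx ▸ gf_mono (subset_insert _ _))
    have := h2 hy
    omega

lemma aux2 {y0 : P} : ∀ (xs : List P) (W : Finset P),
    GreedyFrom A m s W xs → y0 ∉ W → y0 ∉ xs.toFinset → τ ≤ s y0 →
    lowsum A m s τ W xs + xs.length + gf A m W ≤
      (xs.filter (fun x => decide (τ ≤ s x))).length + gf A m (W ∪ xs.toFinset) := by
  intro xs
  induction xs with
  | nil => intro W _ _ _ _; simp [lowsum]
  | cons x t ih =>
    intro W hg hy0W hy0t hy0
    rcases hg with ⟨hx, hcond, ht⟩
    have hy0x : y0 ≠ x := by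
      intro h; exact hy0t (by simp [h])
    have hy0t' : y0 ∉ t.toFinset := fun h => hy0t (by simp [h])
    have hy0W' : y0 ∉ insert x W := by
      simp [hy0x, hy0W]
    have hIH := ih (insert x W) ht hy0W' hy0t' hy0
    have hUn : insert x W ∪ t.toFinset = W ∪ (x :: t).toFinset := by
      simp [Finset.insert_union, Finset.union_insert]
    rw [hUn] at hIH
    by_cases hsx : τ ≤ s x
    · have hmono : gf A m W ≤ gf A m (insert x W) := gf_mono (subset_insert _ _)
      rw [List.filter_cons_of_pos (by simp [hsx])]
      simp only [lowsum, if_neg (not_lt.mpr hsx), List.length_cons]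
      omega
    · have hlow : s x < τ := not_le.mp hsx
      have hcov : gf A m W < gf A m (insert x W) := low_cov hcond hy0W hy0 hlow
      rw [List.filter_cons_of_neg (by simp [hsx])]
      simp only [lowsum, if_pos hlow, List.length_cons]
      omega

lemma fair_step {W Wstar : Finset P} {x : P} (hxW : x ∉ W) (i : Fin k)
    (hfair : m i ≤ min (m i) ((W ∩ A i).card) + (Wstar ∩ A i).card) :
    m i ≤ min (m i) ((insert x W ∩ A i).card) + ((Wstar.erase x ∩ A i).card) := by
  by_cases hxA : x ∈ A i
  · have h1 : (insert x W ∩ A i) = insert x (W ∩ A i) := insert_inter_of_mem hxA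
    have h2 : (insert x W ∩ A i).card = (W ∩ A i).card + 1 := by
      rw [h1, card_insert_of_notMem (fun hc => hxW (mem_of_mem_inter_left hc))]
    have h3 : (Wstar ∩ A i).card ≤ (Wstar.erase x ∩ A i).card + 1 := by
      have hsub : Wstar ∩ A i ⊆ insert x (Wstar.erase x ∩ A i) := by
        intro y hy
        rcases eq_or_ne y x with rfl | hne
        · exact mem_insert_self _ _
        · exact mem_insert_of_mem (mem_inter.mpr
            ⟨mem_erase.mpr ⟨hne, (mem_inter.mp hy).1⟩, (mem_inter.mp hy).2⟩)
      calc (Wstar ∩ A i).card ≤ (insert x (Wstar.erase x ∩ A i)).card :=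
            card_le_card hsub
        _ ≤ (Wstar.erase x ∩ A i).card + 1 := card_insert_le _ _
    rw [h2]
    rw [Nat.min_def] at hfair ⊢
    split_ifs at hfair ⊢ <;> omega
  · have h1 : insert x W ∩ A i = W ∩ A i := insert_inter_of_notMem hxA
    have h2 : Wstar.erase x ∩ A i = Wstar ∩ A i := by
      ext y
      simp only [mem_inter, mem_erase]
      constructor
      · rintro ⟨⟨_, h⟩, h'⟩; exact ⟨h, h'⟩
      · rintro ⟨h, h'⟩; exact ⟨⟨fun hy => hxA (hy ▸ h'), h⟩, h'⟩
    rw [h1, h2]; exact hfair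

lemma sum_indicator_inter (T Z : Finset P) :
    (∑ q ∈ T, if q ∈ Z then 1 else 0) = (T ∩ Z).card := by
  rw [Finset.sum_ite_mem]
  simp

/-- The key counting lemma: if some project of `Wstar` of welfare at least `τ`
is never picked, then the number of `Wstar`-projects of welfare at least `τ`
is at most the number of high-welfare greedy picks plus the coverage surplus
of low-welfare picks (plus the cardinality excess `e`). -/
lemma key : ∀ (xs : List P) (W Wstar : Finset P) (e : ℕ),
    GreedyFrom A m s W xs →
    Disjoint Wstar W →
    (∀ i, m i ≤ min (m i) ((W ∩ A i).card) + (Wstar ∩ A i).card) →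
    Wstar.card ≤ xs.length + e →
    (∃ y0 ∈ Wstar, τ ≤ s y0 ∧ y0 ∉ W ∧ y0 ∉ xs.toFinset) →
    (Wstar.filter (fun y => τ ≤ s y)).card ≤
      (xs.filter (fun x => decide (τ ≤ s x))).length + lowsum A m s τ W xs + e := by
  intro xs
  induction xs with
  | nil =>
    intro W Wstar e _ _ _ hcard _
    simp only [List.filter_nil, List.length_nil, lowsum, Nat.zero_add]
    simpa using le_trans (card_filter_le _ _) hcard
  | cons x t ih =>
    intro W Wstar e hg hdis hfair hcard hy0ex
    obtain ⟨y0, hy0S, hy0s, hy0W, hy0xt⟩ := hy0ex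
    rcases hg with ⟨hxW, hcond, ht⟩
    have hy0x : y0 ≠ x := fun h => hy0xt (by simp [h])
    have hy0t : y0 ∉ t.toFinset := fun h => hy0xt (by simp [h])
    have hy0W' : y0 ∉ insert x W := by simp [hy0x, hy0W]
    have hfair' : ∀ i, m i ≤ min (m i) ((insert x W ∩ A i).card) +
        ((Wstar.erase x ∩ A i).card) := fun i => fair_step hxW i (hfair i)
    by_cases hsx : τ ≤ s x
    -- CASE HIGH
    · rw [List.filter_cons_of_pos (by simp [hsx])]
      simp only [lowsum, if_neg (not_lt.mpr hsx), List.length_cons, Nat.zero_add]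
      by_cases hxS : x ∈ Wstar
      · have hdis' : Disjoint (Wstar.erase x) (insert x W) := by
          rw [Finset.disjoint_insert_right]
          exact ⟨notMem_erase _ _, Finset.disjoint_of_subset_left (erase_subset _ _) hdis⟩
        have hcard' : (Wstar.erase x).card ≤ t.length + e := by
          rw [card_erase_of_mem hxS]
          simp only [List.length_cons] at hcard
          omega
        have hIH := ih (insert x W) (Wstar.erase x) e ht hdis' hfair' hcard'
          ⟨y0, mem_erase.mpr ⟨hy0x, hy0S⟩, hy0s, hy0W', hy0t⟩
        have hYsub : Wstar.filter (fun y => τ ≤ s y) ⊆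
            insert x ((Wstar.erase x).filter (fun y => τ ≤ s y)) := by
          intro y hy
          rcases eq_or_ne y x with rfl | hne
          · exact mem_insert_self _ _
          · rw [mem_filter] at hy
            exact mem_insert_of_mem (mem_filter.mpr
              ⟨mem_erase.mpr ⟨hne, hy.1⟩, hy.2⟩)
        have hYle : (Wstar.filter (fun y => τ ≤ s y)).card ≤
            ((Wstar.erase x).filter (fun y => τ ≤ s y)).card + 1 :=
          le_trans (card_le_card hYsub) (card_insert_le _ _)
        omega
      · have hdis' : Disjoint Wstar (insert x W) := by
          rw [Finset.disjoint_insert_right]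
          exact ⟨hxS, hdis⟩
        have hfair'' : ∀ i, m i ≤ min (m i) ((insert x W ∩ A i).card) +
            ((Wstar ∩ A i).card) := by
          intro i
          have := hfair' i
          rwa [Finset.erase_eq_of_notMem hxS] at this
        have hcard' : Wstar.card ≤ t.length + (e + 1) := by
          simp only [List.length_cons] at hcard; omega
        have hIH := ih (insert x W) Wstar (e + 1) ht hdis' hfair'' hcard'
          ⟨y0, hy0S, hy0s, hy0W', hy0t⟩
        omega
    -- CASE LOW
    · have hlow : s x < τ := not_le.mp hsx
      have hcov : gf A m W < gf A m (insert x W) := low_cov hcond hy0W hy0s hlow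
      rw [List.filter_cons_of_neg (by simp [hsx])]
      simp only [lowsum, if_pos hlow]
      by_cases hr2 : gf A m W + 2 ≤ gf A m (insert x W)
      -- CASE r0 ≥ 2
      · by_cases hxS : x ∈ Wstar
        · have hdis' : Disjoint (Wstar.erase x) (insert x W) := by
            rw [Finset.disjoint_insert_right]
            exact ⟨notMem_erase _ _, Finset.disjoint_of_subset_left (erase_subset _ _) hdis⟩
          have hcard' : (Wstar.erase x).card ≤ t.length + e := by
            rw [card_erase_of_mem hxS]
            simp only [List.length_cons] at hcard
            omega
          have hIH := ih (insert x W) (Wstar.erase x) e ht hdis' hfair' hcard'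
            ⟨y0, mem_erase.mpr ⟨hy0x, hy0S⟩, hy0s, hy0W', hy0t⟩
          have hYeq : (Wstar.erase x).filter (fun y => τ ≤ s y) =
              Wstar.filter (fun y => τ ≤ s y) := by
            ext y
            simp only [mem_filter, mem_erase]
            constructor
            · rintro ⟨⟨_, h⟩, h'⟩; exact ⟨h, h'⟩
            · rintro ⟨h, h'⟩
              refine ⟨⟨fun hyx => ?_, h⟩, h'⟩
              subst hyx; omega
          rw [hYeq] at hIH
          omega
        · have hdis' : Disjoint Wstar (insert x W) := by
            rw [Finset.disjoint_insert_right]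
            exact ⟨hxS, hdis⟩
          have hfair'' : ∀ i, m i ≤ min (m i) ((insert x W ∩ A i).card) +
              ((Wstar ∩ A i).card) := by
            intro i
            have := hfair' i
            rwa [Finset.erase_eq_of_notMem hxS] at this
          have hcard' : Wstar.card ≤ t.length + (e + 1) := by
            simp only [List.length_cons] at hcard; omega
          have hIH := ih (insert x W) Wstar (e + 1) ht hdis' hfair'' hcard'
            ⟨y0, hy0S, hy0s, hy0W', hy0t⟩
          omega
      -- CASE r0 = 1
      · have hr1 : gf A m (insert x W) = gf A m W + 1 := by omega
        have hmargx : (∑ i, (if x ∈ A i ∧ (W ∩ A i).card < m i then 1 else 0)) = 1 := by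
          have := gf_insert (A := A) (m := m) hxW (q := x)
          omega
        have hM1 : ∀ q ∈ Wstar,
            (∑ i, (if q ∈ A i ∧ (W ∩ A i).card < m i then 1 else 0)) ≤ 1 := by
          intro q hq
          have hqW : q ∉ W := Finset.disjoint_left.mp hdis hq
          have h := (hcond q hqW).1
          rw [gf_insert hqW, hr1] at h
          omega
        have hM0 : ∀ q ∈ Wstar, τ ≤ s q →
            (∑ i, (if q ∈ A i ∧ (W ∩ A i).card < m i then 1 else 0)) = 0 := by
          intro q hq hqs
          have hqW : q ∉ W := Finset.disjoint_left.mp hdis hq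
          by_contra hne
          have h1 : (∑ i, (if q ∈ A i ∧ (W ∩ A i).card < m i then 1 else 0)) = 1 := by
            have := hM1 q hq; omega
          have heq : gf A m (insert q W) = gf A m (insert x W) := by
            rw [gf_insert hqW, h1, hr1]
          have := (hcond q hqW).2 heq
          omega
        have hclaim1 : (∑ i, (m i - min (m i) ((W ∩ A i).card))) ≤
            ∑ q ∈ Wstar, ∑ i, (if q ∈ A i ∧ (W ∩ A i).card < m i then 1 else 0) := by
          rw [Finset.sum_comm]
          refine Finset.sum_le_sum fun i _ => ?_
          by_cases hc : (W ∩ A i).card < m i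
          · have h1 : (∑ q ∈ Wstar, if q ∈ A i ∧ (W ∩ A i).card < m i then 1 else 0) =
                (Wstar ∩ A i).card := by
              rw [← sum_indicator_inter Wstar (A i)]
              exact Finset.sum_congr rfl fun q _ => by simp [hc]
            rw [h1]
            have := hfair i
            rw [Nat.min_def] at this ⊢
            split_ifs at this ⊢ <;> omega
          · have h1 : (∑ q ∈ Wstar, if q ∈ A i ∧ (W ∩ A i).card < m i then 1 else 0) = 0 := by
              refine Finset.sum_eq_zero fun q _ => by simp [hc]
            rw [h1]
            rw [Nat.min_def]
            split_ifs <;> omega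
        have hclaim2 : (∑ q ∈ Wstar, ∑ i, (if q ∈ A i ∧ (W ∩ A i).card < m i then 1 else 0))
            + (Wstar.filter (fun y => τ ≤ s y)).card ≤ Wstar.card := by
          rw [← Finset.sum_filter_add_sum_filter_not Wstar (fun y => τ ≤ s y)]
          have hz : (∑ q ∈ Wstar.filter (fun y => τ ≤ s y),
              ∑ i, (if q ∈ A i ∧ (W ∩ A i).card < m i then 1 else 0)) = 0 :=
            Finset.sum_eq_zero fun q hq =>
              hM0 q (mem_filter.mp hq).1 (mem_filter.mp hq).2
          have hone : (∑ q ∈ Wstar.filter (fun y => ¬ τ ≤ s y),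
              ∑ i, (if q ∈ A i ∧ (W ∩ A i).card < m i then 1 else 0)) ≤
              (Wstar.filter (fun y => ¬ τ ≤ s y)).card := by
            rw [Finset.card_eq_sum_ones]
            exact Finset.sum_le_sum fun q hq => hM1 q (mem_filter.mp hq).1
          have hsplit : (Wstar.filter (fun y => τ ≤ s y)).card +
              (Wstar.filter (fun y => ¬ τ ≤ s y)).card = Wstar.card :=
            Finset.card_filter_add_card_filter_not _
          omega
        have haux := aux2 (y0 := y0) (x :: t) W ⟨hxW, hcond, ht⟩ hy0W hy0xt hy0s
        have hgfres : gf A m (W ∪ (x :: t).toFinset) ≤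
            gf A m W + (∑ i, (m i - min (m i) ((W ∩ A i).card))) := by
          simp only [gf]
          rw [← Finset.sum_add_distrib]
          refine Finset.sum_le_sum fun i _ => ?_
          rw [Nat.min_def, Nat.min_def]
          split_ifs <;> omega
        rw [List.filter_cons_of_neg (by simp [hsx]), List.length_cons] at haux
        simp only [lowsum, if_pos hlow] at haux
        simp only [List.length_cons] at hcard
        omega

/-- greedy reaches full coverage -/
lemma cov_aux (hA : ∀ i, m i ≤ (A i).card) : ∀ (xs : List P) (W : Finset P),
    GreedyFrom A m s W xs →
    min (∑ i, m i) (gf A m W + xs.length) ≤ gf A m (W ∪ xs.toFinset) := by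
  intro xs
  induction xs with
  | nil => intro W _; simpa using min_le_right _ _
  | cons x t ih =>
    intro W hg
    rcases hg with ⟨hxW, hcond, ht⟩
    have hIH := ih (insert x W) ht
    have hUn : insert x W ∪ t.toFinset = W ∪ (x :: t).toFinset := by
      simp [Finset.insert_union, Finset.union_insert]
    rw [hUn] at hIH
    rcases Nat.lt_or_ge (gf A m W) (∑ i, m i) with hlt | hge
    · have hex : ∃ i, (W ∩ A i).card < m i := by
        by_contra hno
        push_neg at hno
        have : gf A m W = ∑ i, m i := by
          rw [gf]
          exact Finset.sum_congr rfl fun i _ => min_eq_left (hno i)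
        omega
      obtain ⟨i0, hi0⟩ := hex
      have hy : ∃ y, y ∈ A i0 ∧ y ∉ W := by
        have h1 : (A i0 \ W).Nonempty := by
          rw [← Finset.card_pos]
          have h2 : (A i0 ∩ W).card < (A i0).card := by
            have h3 : (A i0 ∩ W).card = (W ∩ A i0).card := by rw [Finset.inter_comm]
            rw [h3]
            exact lt_of_lt_of_le hi0 (hA i0)
          have := Finset.card_sdiff_add_card_inter (A i0) W
          omega
        obtain ⟨y, hy⟩ := h1
        rw [Finset.mem_sdiff] at hy
        exact ⟨y, hy.1, hy.2⟩
      obtain ⟨y, hyA, hyW⟩ := hy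
      have hymarg : gf A m W + 1 ≤ gf A m (insert y W) := by
        rw [gf_insert hyW]
        have h1 : (1 : ℕ) ≤ ∑ i, (if y ∈ A i ∧ (W ∩ A i).card < m i then 1 else 0) := by
          have h2 := Finset.single_le_sum
            (f := fun i => if y ∈ A i ∧ (W ∩ A i).card < m i then (1:ℕ) else 0)
            (fun i _ => Nat.zero_le _) (mem_univ i0)
          have h3 : (if y ∈ A i0 ∧ (W ∩ A i0).card < m i0 then (1:ℕ) else 0) = 1 := by
            simp [hyA, hi0]
          rw [h3] at h2
          exact h2
        omega
      have hx1 : gf A m W + 1 ≤ gf A m (insert x W) :=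
        le_trans hymarg (hcond y hyW).1
      simp only [List.length_cons]
      omega
    · have hmono : gf A m W ≤ gf A m (W ∪ (x :: t).toFinset) :=
        gf_mono Finset.subset_union_left
      omega

lemma min_eq_of_sum {c : Fin k → ℕ} (h : ∑ i, m i ≤ ∑ i, min (m i) (c i)) :
    ∀ i, m i ≤ c i := by
  intro i
  by_contra hc
  push_neg at hc
  have hlt : min (m i) (c i) < m i := by omega
  have hle : ∀ j ∈ univ, min (m j) (c j) ≤ m j := fun j _ => min_le_left _ _
  have := Finset.sum_lt_sum hle ⟨i, mem_univ i, hlt⟩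
  omega

lemma nodup_of_greedy : ∀ (xs : List P) (W : Finset P),
    GreedyFrom A m s W xs → xs.Nodup ∧ ∀ x ∈ xs, x ∉ W := by
  intro xs
  induction xs with
  | nil => intro W _; exact ⟨List.nodup_nil, by simp⟩
  | cons x t ih =>
    intro W hg
    rcases hg with ⟨hxW, _, ht⟩
    obtain ⟨hnd, hmem⟩ := ih (insert x W) ht
    constructor
    · refine List.nodup_cons.mpr ⟨fun hx => ?_, hnd⟩
      exact (hmem x hx) (mem_insert_self _ _)
    · intro z hz
      rcases List.mem_cons.mp hz with rfl | hz'
      · exact hxW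
      · intro hzW
        exact (hmem z hz') (mem_insert_of_mem hzW)

lemma Dlem (xs : List P) (Wstar : Finset P)
    (hg : GreedyFrom A m s ∅ xs)
    (hM : ∑ i, m i ≤ xs.length)
    (hfair : ∀ i, m i ≤ (Wstar ∩ A i).card)
    (hcard : Wstar.card ≤ xs.length) (τ : ℕ) :
    (Wstar.filter (fun y => τ ≤ s y)).card ≤
      2 * (xs.filter (fun x => decide (τ ≤ s x))).length := by
  by_cases hex : ∃ y0, y0 ∈ Wstar ∧ τ ≤ s y0 ∧ y0 ∉ xs.toFinset
  · obtain ⟨y0, h1, h2, h3⟩ := hex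
    have hkey := key xs ∅ Wstar 0 hg (Finset.disjoint_empty_right _)
      (fun i => by simpa using hfair i) (by simpa using hcard)
      ⟨y0, h1, h2, Finset.notMem_empty _, h3⟩
    have haux := aux2 xs ∅ hg (Finset.notMem_empty y0) h3 h2
    have h4 : gf A m ((∅ : Finset P) ∪ xs.toFinset) ≤ xs.length := le_trans (gf_le _) hM
    have h5 : gf A m (∅ : Finset P) = 0 := gf_empty
    omega
  · push_neg at hex
    have hsub : Wstar.filter (fun y => τ ≤ s y) ⊆
        (xs.filter (fun x => decide (τ ≤ s x))).toFinset := by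
      intro y hy
      rw [mem_filter] at hy
      rw [List.mem_toFinset, List.mem_filter]
      exact ⟨List.mem_toFinset.mp (hex y hy.1 hy.2), by simpa using hy.2⟩
    have h1 := card_le_card hsub
    have h2 := (xs.filter (fun x => decide (τ ≤ s x))).toFinset_card_le
    omega

lemma layer (X : Finset P) (T : ℕ) (hT : ∀ y ∈ X, s y ≤ T) :
    ∑ y ∈ X, s y = ∑ t ∈ Finset.Icc 1 T, (X.filter (fun y => t ≤ s y)).card := by
  have h1 : ∀ t, (X.filter (fun y => t ≤ s y)).card =
      ∑ y ∈ X, if t ≤ s y then 1 else 0 := by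
    intro t; rw [Finset.card_filter]
  simp_rw [h1]
  rw [Finset.sum_comm]
  refine Finset.sum_congr rfl fun y hy => ?_
  rw [← Finset.sum_filter]
  have h2 : (Finset.Icc 1 T).filter (fun t => t ≤ s y) = Finset.Icc 1 (s y) := by
    ext t
    simp only [Finset.mem_filter, Finset.mem_Icc]
    constructor
    · rintro ⟨⟨ha, _⟩, hc⟩; exact ⟨ha, hc⟩
    · rintro ⟨ha, hc⟩; exact ⟨⟨ha, le_trans hc (hT y hy)⟩, hc⟩
  rw [h2]
  simp [Nat.card_Icc]

lemma comb_main (xs : List P) (Wstar : Finset P)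
    (hg : GreedyFrom A m s ∅ xs)
    (hM : ∑ i, m i ≤ xs.length)
    (hfair : ∀ i, m i ≤ (Wstar ∩ A i).card)
    (hcard : Wstar.card ≤ xs.length)
    (hnd : xs.Nodup)
    (T : ℕ) (hT : ∀ y, s y ≤ T) :
    ∑ y ∈ Wstar, s y ≤ 2 * ∑ q ∈ xs.toFinset, s q := by
  rw [layer Wstar T (fun y _ => hT y), layer xs.toFinset T (fun y _ => hT y)]
  rw [Finset.mul_sum]
  refine Finset.sum_le_sum fun t _ => ?_
  have h1 := Dlem xs Wstar hg hM hfair hcard t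
  have h2 : (xs.filter (fun x => decide (t ≤ s x))).length =
      (xs.toFinset.filter (fun y => t ≤ s y)).card := by
    rw [← List.toFinset_card_of_nodup (List.Nodup.filter _ hnd)]
    congr 1
    ext y
    simp only [List.mem_toFinset, List.mem_filter, Finset.mem_filter,
      decide_eq_true_eq]
  rw [h2] at h1
  exact h1

/-- sum of a unanimous welfare function over a finset -/
lemma swsum (swi : P → ℕ) (sz : ℕ) (hun : ∀ x, swi x = 0 ∨ swi x = sz)
    (X : Finset P) :
    ∑ x ∈ X, swi x = sz * ((X ∩ univ.filter (fun x => swi x ≠ 0)).card) := by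
  have h1 : X ∩ univ.filter (fun x => swi x ≠ 0) = X.filter (fun x => swi x ≠ 0) := by
    ext y; simp [mem_filter]
  rw [h1]
  rw [← Finset.sum_filter_add_sum_filter_not X (fun x => swi x ≠ 0)]
  have h2 : ∑ x ∈ X.filter (fun x => ¬ swi x ≠ 0), swi x = 0 := by
    refine Finset.sum_eq_zero fun x hx => ?_
    have := (mem_filter.mp hx).2
    simpa using this
  have h3 : ∑ x ∈ X.filter (fun x => swi x ≠ 0), swi x =
      sz * (X.filter (fun x => swi x ≠ 0)).card := by
    rw [Finset.card_eq_sum_ones, Finset.mul_sum]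
    refine Finset.sum_congr rfl fun x hx => ?_
    have hx2 := (mem_filter.mp hx).2
    rcases hun x with h | h
    · exact absurd h hx2
    · rw [h]; ring
  omega

/-- the residual of a unanimous district is the (natural) coverage deficit -/
lemma resid_eq (swi : P → ℕ) (sz : ℕ) (hun : ∀ x, swi x = 0 ∨ swi x = sz)
    (mi : ℕ) (hmi : mi ≤ (univ.filter (fun x => swi x ≠ 0) : Finset P).card)
    (W : Finset P) :
    resid swi (sz * mi) W =
      ((mi - min mi ((W ∩ univ.filter (fun x => swi x ≠ 0)).card) : ℕ) : ℝ) := by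
  set Ai : Finset P := univ.filter (fun x => swi x ≠ 0) with hAi
  have hmem : ∀ x, x ∈ Ai ↔ swi x ≠ 0 := by
    intro x; rw [hAi]; simp
  have hswA : ∀ x ∈ Ai, swi x = sz := by
    intro x hx
    rcases hun x with h | h
    · exact absurd h ((hmem x).mp hx)
    · exact h
  set a := (W ∩ Ai).card with ha
  set d := mi - min mi a with hd
  have hcards : (Ai \ W).card + (Ai ∩ W).card = Ai.card := card_sdiff_add_card_inter _ _
  have haeq : (Ai ∩ W).card = a := by rw [ha, inter_comm]
  have hdle : d ≤ (Ai \ W).card := by omega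
  obtain ⟨B, hBsub, hBcard⟩ := Finset.exists_subset_card_eq hdle
  set p : P → ℝ := fun x => if x ∈ B then (1:ℝ) else 0 with hp
  have hBA : B ⊆ Ai := hBsub.trans (sdiff_subset)
  have hsumWc : ∀ X : Finset P, (∑ x ∈ X, (swi x : ℝ)) = (sz : ℝ) * ((X ∩ Ai).card : ℝ) := by
    intro X
    have h := congrArg (fun n : ℕ => (n:ℝ)) (swsum swi sz hun X)
    rw [← hAi] at h
    push_cast at h
    exact h
  have hfeas : FracFeasible swi (sz * mi) W p := by
    refine ⟨fun x => ?_, fun x hx => ?_, ?_⟩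
    · rw [hp]; dsimp only; split_ifs <;> norm_num
    · rw [hp]; dsimp only
      rw [if_neg]
      intro hxB
      exact (Finset.mem_sdiff.mp (hBsub hxB)).2 hx
    · have h1 : ∑ x, p x * (swi x : ℝ) = (sz : ℝ) * (d : ℝ) := by
        rw [hp]
        have h0 : ∀ x : P, (if x ∈ B then (1:ℝ) else 0) * (swi x : ℝ) =
            (if x ∈ B then (swi x : ℝ) else 0) := by
          intro x; split_ifs <;> ring
        simp_rw [h0]
        rw [Finset.sum_ite_mem, univ_inter]
        have h5 : ∀ x ∈ B, (swi x : ℝ) = (sz : ℝ) := by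
          intro x hx; rw [hswA x (hBA hx)]
        rw [Finset.sum_congr rfl h5, Finset.sum_const, hBcard]
        push_cast
        ring
      rw [h1, hsumWc W, ← ha]
      have h2 : mi ≤ a + d := by omega
      have h3 : (sz * mi : ℕ) ≤ sz * (a + d) := Nat.mul_le_mul_left _ h2
      have h3' : ((sz * mi : ℕ) : ℝ) ≤ ((sz * (a + d) : ℕ) : ℝ) := Nat.cast_le.mpr h3
      push_cast at h3'
      push_cast
      linarith [h3']
  have hval : ∑ x, p x = (d : ℝ) := by
    rw [hp]
    dsimp only
    rw [Finset.sum_ite_mem, univ_inter, Finset.sum_const, hBcard]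
    simp
  have hlb : ∀ r ∈ ((fun p : P → ℝ => ∑ x, p x) '' {p | FracFeasible swi (sz * mi) W p}),
      (d : ℝ) ≤ r := by
    rintro r ⟨q, hq, rfl⟩
    obtain ⟨hq01, hqW, hqf⟩ := hq
    have hqnn : (0:ℝ) ≤ ∑ x, q x := Finset.sum_nonneg fun x _ => (hq01 x).1
    by_cases hsz : sz = 0
    · have hAempty : Ai = ∅ := by
        rw [hAi]
        ext x
        simp only [mem_filter, mem_univ, true_and, notMem_empty, iff_false]
        intro h
        rcases hun x with h' | h'
        · exact h h'
        · rw [hsz] at h'; exact h h'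
      have hmi0 : mi = 0 := by
        rw [hAempty] at hmi; simpa using hmi
      have hd0 : d = 0 := by omega
      rw [hd0]
      simpa using hqnn
    · have hszpos : (0:ℝ) < (sz : ℝ) := by
        have : 0 < sz := Nat.pos_of_ne_zero hsz
        exact_mod_cast this
      have h1 : ∑ x, q x * (swi x : ℝ) = (sz:ℝ) * ∑ x ∈ Ai, q x := by
        rw [Finset.mul_sum]
        rw [← Finset.sum_subset (Finset.subset_univ Ai)]
        · refine Finset.sum_congr rfl fun x hx => ?_
          rw [hswA x hx]; ring
        · intro x _ hx
          have h6 : swi x = 0 := by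
            by_contra hne
            exact hx ((hmem x).mpr hne)
          rw [h6]
          simp
      have h2 : ∑ x ∈ Ai, q x ≤ ∑ x, q x :=
        Finset.sum_le_sum_of_subset_of_nonneg (Finset.subset_univ Ai)
          (fun x _ _ => (hq01 x).1)
      rw [hsumWc W, ← ha, h1] at hqf
      push_cast at hqf
      have h3 : (mi:ℝ) ≤ (a:ℝ) + ∑ x ∈ Ai, q x := by nlinarith
      have h4 : (d:ℝ) ≤ max ((mi:ℝ) - a) 0 := by
        rcases Nat.le_total mi a with h | h
        · have hd0 : d = 0 := by omega
          rw [hd0]; simp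
        · have hda : d = mi - a := by omega
          have h7 : (d:ℝ) = (mi:ℝ) - a := by
            rw [hda]
            push_cast [Nat.cast_sub h]
            ring
          rw [h7]
          exact le_max_left _ _
      rcases le_max_iff.mp h4 with h5 | h5
      · linarith
      · linarith
  refine le_antisymm ?_ ?_
  · exact csInf_le ⟨0, fun r hr => le_trans (by positivity) (hlb r hr)⟩
      ⟨p, hfeas, hval⟩
  · exact le_csInf ⟨(d:ℝ), p, hfeas, hval⟩ hlb

/-- characterization of the fair share -/
lemma f_eq {swi : P → ℕ} {sz bdi fi : ℕ} (hun : ∀ x, swi x = 0 ∨ swi x = sz)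
    (hf : IsGreatest {v | ∃ B : Finset P, B.card ≤ bdi ∧ v = ∑ x ∈ B, swi x} fi) :
    fi = sz * min bdi ((univ.filter (fun x => swi x ≠ 0) : Finset P).card) := by
  set Ai : Finset P := univ.filter (fun x => swi x ≠ 0) with hAi
  obtain ⟨⟨Aset, hAc, hAv⟩, hub⟩ := hf
  have hup : fi ≤ sz * min bdi Ai.card := by
    rw [hAv, swsum swi sz hun Aset, ← hAi]
    apply Nat.mul_le_mul_left
    have h1 : (Aset ∩ Ai).card ≤ Aset.card := card_le_card inter_subset_left
    have h2 : (Aset ∩ Ai).card ≤ Ai.card := card_le_card inter_subset_right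
    omega
  have hlo : sz * min bdi Ai.card ≤ fi := by
    obtain ⟨B, hBsub, hBc⟩ :=
      Finset.exists_subset_card_eq (min_le_right bdi Ai.card)
    apply hub
    refine ⟨B, by omega, ?_⟩
    rw [swsum swi sz hun B, ← hAi]
    have hBi : B ∩ Ai = B := Finset.inter_eq_left.mpr hBsub
    rw [hBi, hBc]
  omega

end UGH

/-- the Unanimous Greedy Algorithm, which for `b` rounds adds an
unchosen project of maximum conditional coverage (breaking ties by maximum
total welfare), returns a district-fair budget-feasible outcome whose social
welfare is at least half of that of any district-fair budget-feasible
outcome.  Here all projects have unit cost and districts are unanimous: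
`sw i x ∈ {0, size i}`. -/
theorem unanimous_greedy_half_approx
    {P : Type*} [Fintype P] [DecidableEq P] {k : ℕ}
    (sw : Fin k → P → ℕ) (size : Fin k → ℕ)
    (hun : ∀ i x, sw i x = 0 ∨ sw i x = size i)
    (bd : Fin k → ℕ) (b : ℕ) (hb : ∑ i, bd i = b)
    (henough : b ≤ Fintype.card P)
    (f : Fin k → ℕ)
    (hf : ∀ i, IsGreatest
      {v | ∃ A : Finset P, A.card ≤ bd i ∧ v = ∑ x ∈ A, sw i x} (f i))
    (Wseq : ℕ → Finset P) (xseq : ℕ → P)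
    (hW0 : Wseq 0 = ∅)
    (hstep : ∀ j < b, Wseq (j + 1) = insert (xseq j) (Wseq j))
    (hnew : ∀ j < b, xseq j ∉ Wseq j)
    (hgreedy : ∀ j < b, ∀ y ∉ Wseq j,
      coverTot sw f bd (insert y (Wseq j)) ≤
        coverTot sw f bd (insert (xseq j) (Wseq j)))
    (htie : ∀ j < b, ∀ y ∉ Wseq j,
      coverTot sw f bd (insert y (Wseq j)) =
        coverTot sw f bd (insert (xseq j) (Wseq j)) →
      (∑ i, sw i y) ≤ ∑ i, sw i (xseq j)) :
    (∀ i, f i ≤ ∑ x ∈ Wseq b, sw i x) ∧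
    (Wseq b).card ≤ b ∧
    (∀ Wstar : Finset P, Wstar.card ≤ b →
      (∀ i, f i ≤ ∑ x ∈ Wstar, sw i x) →
      ∑ i, ∑ x ∈ Wstar, sw i x ≤ 2 * ∑ i, ∑ x ∈ Wseq b, sw i x) := by
  classical
  set A : Fin k → Finset P := fun i => univ.filter (fun x => sw i x ≠ 0) with hA
  set m : Fin k → ℕ := fun i => min (bd i) ((A i).card) with hm
  set sfun : P → ℕ := fun x => ∑ i, sw i x with hsfun
  have hmA : ∀ i, m i ≤ (A i).card := fun i => min_le_right _ _
  have hfeq : ∀ i, f i = size i * m i := fun i => UGH.f_eq (hun i) (hf i)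
  have hswsum : ∀ i (X : Finset P), ∑ x ∈ X, sw i x = size i * ((X ∩ A i).card) :=
    fun i X => UGH.swsum (sw i) (size i) (hun i) X
  -- coverTot in combinatorial terms
  have hcov : ∀ X : Finset P, coverTot sw f bd X =
      (∑ i, ((bd i : ℝ) - (m i : ℝ))) + (UGH.gf A m X : ℝ) := by
    intro X
    rw [coverTot, UGH.gf]
    push_cast
    rw [← Finset.sum_add_distrib]
    refine Finset.sum_congr rfl fun i _ => ?_
    have hr : resid (sw i) (f i) X =
        ((m i - min (m i) ((X ∩ A i).card) : ℕ) : ℝ) := by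
      rw [hfeq i]
      exact UGH.resid_eq (sw i) (size i) (hun i) (m i) (hmA i) X
    rw [hr]
    have hle : min (m i) ((X ∩ A i).card) ≤ m i := min_le_left _ _
    rw [Nat.cast_sub hle]
    push_cast
    ring
  -- greedy hypotheses in combinatorial terms
  have hgf : ∀ j, j < b → ∀ y, y ∉ Wseq j →
      UGH.gf A m (insert y (Wseq j)) ≤ UGH.gf A m (insert (xseq j) (Wseq j)) ∧
      (UGH.gf A m (insert y (Wseq j)) = UGH.gf A m (insert (xseq j) (Wseq j)) →
        sfun y ≤ sfun (xseq j)) := by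
    intro j hj y hy
    constructor
    · have h := hgreedy j hj y hy
      rw [hcov, hcov] at h
      have h2 := le_of_add_le_add_left h
      exact_mod_cast h2
    · intro heq
      apply htie j hj y hy
      rw [hcov, hcov, heq]
  -- the greedy list
  set xs : List P := (List.range b).map xseq with hxs
  have hlen : xs.length = b := by simp [hxs]
  have hgfrom : ∀ n j, j + n = b →
      UGH.GreedyFrom A m sfun (Wseq j) ((List.range' j n).map xseq) := by
    intro n
    induction n with
    | zero => intro j hj; simp [UGH.GreedyFrom]
    | succ n ih =>
      intro j hj
      rw [List.range'_succ]
      simp only [List.map_cons]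
      refine ⟨hnew j (by omega), fun y hy => hgf j (by omega) y hy, ?_⟩
      rw [← hstep j (by omega)]
      exact ih (j + 1) (by omega)
  have hg0 : UGH.GreedyFrom A m sfun ∅ xs := by
    have h := hgfrom b 0 (by omega)
    rw [hW0] at h
    rw [hxs, List.range_eq_range']
    exact h
  have hWseq : ∀ j, j ≤ b → Wseq j = ((List.range j).map xseq).toFinset := by
    intro j
    induction j with
    | zero => intro _; simp [hW0]
    | succ j ih =>
      intro hj
      rw [hstep j (by omega), ih (by omega), List.range_succ]
      simp only [List.map_append, List.map_cons, List.map_nil,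
        List.toFinset_append, List.toFinset_cons, List.toFinset_nil]
      ext z
      simp only [Finset.mem_insert, Finset.mem_union, List.mem_toFinset]
      tauto
  have hWb : Wseq b = xs.toFinset := hWseq b le_rfl
  have hnd : xs.Nodup := (UGH.nodup_of_greedy xs ∅ hg0).1
  have hMb : ∑ i, m i ≤ b := by
    calc ∑ i, m i ≤ ∑ i, bd i :=
          Finset.sum_le_sum fun i _ => min_le_left _ _
      _ = b := hb
  -- full coverage
  have hcovfull : ∀ i, m i ≤ ((Wseq b ∩ A i)).card := by
    have h1 := UGH.cov_aux hmA xs ∅ hg0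
    rw [Finset.empty_union, UGH.gf_empty, Nat.zero_add, hlen] at h1
    rw [min_eq_left hMb] at h1
    rw [hWb]
    exact UGH.min_eq_of_sum h1
  refine ⟨?_, ?_, ?_⟩
  · intro i
    rw [hfeq i, hswsum i (Wseq b)]
    exact Nat.mul_le_mul_left _ (hcovfull i)
  · rw [hWb]
    calc xs.toFinset.card ≤ xs.length := xs.toFinset_card_le
      _ = b := hlen
  · intro Wstar hWc hWf
    have hfairC : ∀ i, m i ≤ (Wstar ∩ A i).card := by
      intro i
      have h := hWf i
      rw [hfeq i, hswsum i Wstar] at h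
      by_cases hsz : size i = 0
      · have hAe : A i = ∅ := by
          rw [hA]
          ext x
          simp only [mem_filter, mem_univ, true_and, notMem_empty, iff_false]
          intro hne
          rcases hun i x with h' | h'
          · exact hne h'
          · rw [hsz] at h'; exact hne h'
        have : m i = 0 := by
          rw [hm]
          simp only
          rw [hAe]
          simp
        omega
      · exact Nat.le_of_mul_le_mul_left h (Nat.pos_of_ne_zero hsz)
    have hTb : ∀ y, sfun y ≤ ∑ i, size i := by
      intro y
      refine Finset.sum_le_sum fun i _ => ?_
      rcases hun i y with h | h <;> simp [h]
    have hmain := UGH.comb_main xs Wstar hg0 (by omega) hfairC (by omega) hnd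
      (∑ i, size i) hTb
    rw [← hWb] at hmain
    calc ∑ i, ∑ x ∈ Wstar, sw i x = ∑ x ∈ Wstar, sfun x := by
          rw [hsfun, Finset.sum_comm]
      _ ≤ 2 * ∑ x ∈ Wseq b, sfun x := hmain
      _ = 2 * ∑ i, ∑ x ∈ Wseq b, sw i x := by rw [hsfun, Finset.sum_comm]
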